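/- arXiv:2112.09830 — 5 statements merged into one kernel-verified Lean document; each statement's English description precedes it below -/
import Mathlib

section
/- For a set X ⊆ 2^ω and the almost disjoint family A_X = {a_x : x ∈ X} on 2^{<ω}, where a_x = {x↾n : n ∈ ω}: if Y ⊆ X is such that there exists a set Z ⊆ 2^{<ω} with a_y ⊆* Z for all y ∈ Y and a_x ∩ Z =* ∅ for all x ∈ X∖Y, then Y is an F_σ subset of X (in the subspace topology from 2^ω). -/
open Set Topology

/-- The length-n initial segment of x : ℕ → Bool as a finite binary sequence. -/
def res (x : ℕ → Bool) (n : ℕ) : List Bool := (List.range n).map x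

/-- The branch a_x = {x↾n : n ∈ ω} ⊆ 2^{<ω}. -/
def branch (x : ℕ → Bool) : Set (List Bool) := Set.range (res x)

/-- Y is a relative G_δ subset of X. -/
def IsRelGdelta {α : Type*} [TopologicalSpace α] (X Y : Set α) : Prop :=
  ∃ U : ℕ → Set α, (∀ n, IsOpen (U n)) ∧ Y = X ∩ ⋂ n, U n

/-- Y is a relative F_σ subset of X. -/
def IsRelFsigma {α : Type*} [TopologicalSpace α] (X Y : Set α) : Prop :=
  ∃ C : ℕ → Set α, (∀ n, IsClosed (C n)) ∧ Y = X ∩ ⋃ n, C n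

/-- Z is a weak λ-set. -/
def IsWeakLambda {α : Type*} [TopologicalSpace α] (Z : Set α) : Prop :=
  ∀ Y W : Set α, Y ⊆ Z → W ⊆ Z → Y.Countable → W.Countable → Disjoint Y W →
    ∃ H ⊆ Z, IsRelGdelta Z H ∧ IsRelFsigma Z H ∧ Y ⊆ H ∧ W ⊆ Z \ H

/-- S is an F_σ subset of the whole space. -/
def IsFsigma {α : Type*} [TopologicalSpace α] (S : Set α) : Prop :=
  ∃ C : ℕ → Set α, (∀ n, IsClosed (C n)) ∧ S = ⋃ n, C n

lemma res_eq_ofFn (x : ℕ → Bool) (m : ℕ) :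
    List.ofFn (fun i : Fin m => x i) = res x m := by
  apply List.ext_getElem
  · simp [res]
  · intro i h1 h2
    simp [res]

lemma res_injective (x : ℕ → Bool) : Function.Injective (res x) := by
  intro a b h
  have : (res x a).length = (res x b).length := by rw [h]
  simpa [res] using this

theorem stmt0 (X Y : Set (ℕ → Bool)) (hYX : Y ⊆ X) (Z : Set (List Bool))
    (h1 : ∀ y ∈ Y, (branch y \ Z).Finite)
    (h2 : ∀ x ∈ X \ Y, (branch x ∩ Z).Finite) :
    IsRelFsigma X Y := by
  refine ⟨fun n => {x | ∀ m, n ≤ m → res x m ∈ Z}, fun n => ?_, ?_⟩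
  · have : {x : ℕ → Bool | ∀ m, n ≤ m → res x m ∈ Z}
        = ⋂ m, {x : ℕ → Bool | n ≤ m → res x m ∈ Z} := by
      ext x; simp
    simp only []
    rw [this]
    refine isClosed_iInter fun m => ?_
    by_cases hm : n ≤ m
    · have heq : {x : ℕ → Bool | n ≤ m → res x m ∈ Z}
          = (fun x : ℕ → Bool => fun i : Fin m => x i) ⁻¹'
            {v : Fin m → Bool | List.ofFn v ∈ Z} := by
        ext x
        simp only [Set.mem_setOf_eq, Set.mem_preimage, hm, true_implies]
        have : List.ofFn (fun i : Fin m => x i) = res x m := res_eq_ofFn x m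
        rw [this]
      rw [heq]
      exact IsClosed.preimage (f := fun x : ℕ → Bool => fun i : Fin m => x i)
        (continuous_pi fun i => continuous_apply (i : ℕ))
        (isClosed_discrete {v : Fin m → Bool | List.ofFn v ∈ Z})
    · have heq : {x : ℕ → Bool | n ≤ m → res x m ∈ Z} = Set.univ := by
        ext x; simp [hm]
      rw [heq]; exact isClosed_univ
  · ext x
    constructor
    · intro hx
      refine ⟨hYX hx, ?_⟩
      have hfin : {m : ℕ | res x m ∉ Z}.Finite := by
        have := (h1 x hx).preimage (f := res x) (res_injective x).injOn
        refine this.subset ?_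
        intro m hm
        exact ⟨⟨m, rfl⟩, hm⟩
      obtain ⟨N, hN⟩ := hfin.bddAbove
      refine Set.mem_iUnion.2 ⟨N + 1, fun m hm => ?_⟩
      by_contra h
      exact absurd (hN h) (by omega)
    · rintro ⟨hxX, hxU⟩
      by_contra hxY
      have hfin : {m : ℕ | res x m ∈ Z}.Finite := by
        have := (h2 x ⟨hxX, hxY⟩).preimage (f := res x) (res_injective x).injOn
        refine this.subset ?_
        intro m hm
        exact ⟨⟨m, rfl⟩, hm⟩
      obtain ⟨n, hn⟩ := Set.mem_iUnion.1 hxU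
      have : Set.Ici n ⊆ {m : ℕ | res x m ∈ Z} := fun m hm => hn m hm
      exact (Set.Ici_infinite n).mono this hfin
end

section
/- For a set X ⊆ 2^ω: if Y ⊆ X and both Y and X∖Y are F_σ sets relative to X, then there exists Z ⊆ 2^{<ω} such that for every y ∈ Y, {y↾n : n ∈ ω} ⊆* Z and for every x ∈ X∖Y, {x↾n : n ∈ ω} ∩ Z is finite. -/
open Set Topology

lemma res_length (x : ℕ → Bool) (k : ℕ) : (res x k).length = k := by simp [res]

lemma res_eq_iff (x y : ℕ → Bool) (k : ℕ) : res x k = res y k ↔ ∀ i < k, x i = y i := by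
  simp [res, List.map_eq_map_iff]

/-- If C is closed and x ∉ C, some finite initial segment of x avoids C. -/
lemma closed_sep {C : Set (ℕ → Bool)} (hC : IsClosed C) {x : ℕ → Bool} (hx : x ∉ C) :
    ∃ k, ∀ x', (∀ i < k, x' i = x i) → x' ∉ C := by
  have h := hC.isOpen_compl
  rw [isOpen_pi_iff] at h
  obtain ⟨I, u, h1, h2⟩ := h x hx
  refine ⟨I.sup id + 1, fun x' hx' hmem => ?_⟩
  have : x' ∈ (I : Set ℕ).pi u := by
    intro i hi
    have : i < I.sup id + 1 := Nat.lt_succ_of_le (Finset.le_sup (f := id) hi)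
    rw [hx' i this]
    exact (h1 i hi).2
  exact h2 this hmem

theorem stmt1 (X Y : Set (ℕ → Bool)) (hYX : Y ⊆ X)
    (hY : IsRelFsigma X Y) (hC : IsRelFsigma X (X \ Y)) :
    ∃ Z : Set (List Bool),
      (∀ y ∈ Y, (branch y \ Z).Finite) ∧ (∀ x ∈ X \ Y, (branch x ∩ Z).Finite) := by
  obtain ⟨C, hCcl, hCeq⟩ := hY
  obtain ⟨D, hDcl, hDeq⟩ := hC
  -- Z: strings whose cylinder meets some C n (n ≤ length) but misses D m for all m ≤ n
  refine ⟨{ s | ∃ n ≤ s.length, (∃ x', res x' s.length = s ∧ x' ∈ C n) ∧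
      ∀ m ≤ n, ∀ x', res x' s.length = s → x' ∉ D m }, ?_, ?_⟩
  · -- y ∈ Y : branch y \ Z finite
    intro y hy
    have hyX : y ∈ X := hYX hy
    obtain ⟨N, hN⟩ : ∃ N, y ∈ C N := by
      have := hCeq ▸ hy; simpa using this.2
    have hyD : ∀ m, y ∉ D m := by
      intro m hm
      have : y ∈ X \ Y := hDeq ▸ ⟨hyX, mem_iUnion.2 ⟨m, hm⟩⟩
      exact this.2 hy
    choose k hk using fun m => closed_sep (hDcl m) (hyD m)
    set K : ℕ := max N ((Finset.range (N + 1)).sup k) + 1 with hK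
    apply Finite.subset (Set.Finite.image (res y) (Set.finite_Iio K))
    rintro s ⟨⟨n, rfl⟩, hsZ⟩
    refine ⟨n, ?_, rfl⟩
    by_contra hn
    simp only [mem_Iio, not_lt] at hn
    apply hsZ
    refine ⟨N, ?_, ⟨y, by rw [res_length], hN⟩, ?_⟩
    · rw [res_length]; omega
    · intro m hm x' hx' hxD
      have hmK : k m ≤ K := by
        calc k m ≤ (Finset.range (N + 1)).sup k :=
          Finset.le_sup (Finset.mem_range.2 (Nat.lt_succ_of_le hm))
        _ ≤ K := by omega
      rw [res_length] at hx'
      rw [res_eq_iff] at hx'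
      exact hk m x' (fun i hi => hx' i (by omega)) hxD
  · -- x ∈ X \ Y : branch x ∩ Z finite
    intro x hx
    obtain ⟨M, hM⟩ : ∃ M, x ∈ D M := by
      have := hDeq ▸ hx; simpa using this.2
    have hxC : ∀ n, x ∉ C n := by
      intro n hn
      have : x ∈ Y := hCeq ▸ ⟨hx.1, mem_iUnion.2 ⟨n, hn⟩⟩
      exact hx.2 this
    choose k hk using fun n => closed_sep (hCcl n) (hxC n)
    set K : ℕ := (Finset.range M).sup k + 1 with hK
    apply Finite.subset (Set.Finite.image (res x) (Set.finite_Iio K))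
    rintro s ⟨⟨n, rfl⟩, hsZ⟩
    refine ⟨n, ?_, rfl⟩
    by_contra hn
    simp only [mem_Iio, not_lt] at hn
    obtain ⟨j, hjle, ⟨x', hx', hx'C⟩, hD⟩ := hsZ
    rw [res_length] at hjle hx' hD
    have hjM : j < M := by
      by_contra hjM
      push_neg at hjM
      exact hD M hjM x rfl hM
    have hkK : k j ≤ K := by
      have : k j ≤ (Finset.range M).sup k := Finset.le_sup (Finset.mem_range.2 hjM)
      omega
    rw [res_eq_iff] at hx'
    exact hk j x' (fun i hi => hx' i (by omega)) hx'C
end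

section
/- Every weak λ-set Z of a Polish space X is perfectly meager: for every perfect set P ⊆ X, Z ∩ P is meager in P (with the subspace topology). -/
open Set Topology

namespace WeakLambdaAux

open Classical in
/-- Pick two distinct elements of `s` when `s` is infinite. -/
noncomputable def pickPair {α : Type*} (x0 : α) (s : Set α) : α × α :=
  if h : s.Infinite then
    (h.nonempty.some, ((h.diff (Set.finite_singleton h.nonempty.some)).nonempty).some)
  else (x0, x0)

lemma pickPair_spec {α : Type*} (x0 : α) {s : Set α} (h : s.Infinite) :
    (pickPair x0 s).1 ∈ s ∧ (pickPair x0 s).2 ∈ s ∧ (pickPair x0 s).1 ≠ (pickPair x0 s).2 := by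
  rw [pickPair, dif_pos h]
  have ha := h.nonempty.some_mem
  have hb := ((h.diff (Set.finite_singleton h.nonempty.some)).nonempty).some_mem
  refine ⟨ha, hb.1, fun e => hb.2 ?_⟩
  rw [Set.mem_singleton_iff]
  exact e.symm

/-- Accumulated set of already-chosen points. -/
noncomputable def accSet {α : Type*} (T : ℕ → Set α) (x0 : α) : ℕ → Set α
  | 0 => ∅
  | k+1 => accSet T x0 k ∪
      {(pickPair x0 (T k \ accSet T x0 k)).1, (pickPair x0 (T k \ accSet T x0 k)).2}

/-- The pair chosen at stage `k`. -/
noncomputable def pp {α : Type*} (T : ℕ → Set α) (x0 : α) (k : ℕ) : α × α :=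
  pickPair x0 (T k \ accSet T x0 k)

lemma accSet_finite {α : Type*} (T : ℕ → Set α) (x0 : α) (k : ℕ) : (accSet T x0 k).Finite := by
  induction k with
  | zero => simp [accSet]
  | succ k ih => exact ih.union ((Set.finite_singleton _).insert _)

lemma accSet_mono {α : Type*} (T : ℕ → Set α) (x0 : α) : Monotone (accSet T x0) := by
  apply monotone_nat_of_le_succ
  intro k
  exact subset_union_left

lemma mem_accSet_of_lt {α : Type*} (T : ℕ → Set α) (x0 : α) {j k : ℕ} (hjk : j < k) :
    (pp T x0 j).1 ∈ accSet T x0 k ∧ (pp T x0 j).2 ∈ accSet T x0 k := by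
  have h1 : (pp T x0 j).1 ∈ accSet T x0 (j+1) := by simp [accSet, pp]
  have h2 : (pp T x0 j).2 ∈ accSet T x0 (j+1) := by simp [accSet, pp]
  exact ⟨accSet_mono T x0 hjk h1, accSet_mono T x0 hjk h2⟩

lemma pp_spec {α : Type*} (T : ℕ → Set α) (x0 : α) {k : ℕ} (hk : (T k).Infinite) :
    (pp T x0 k).1 ∈ T k \ accSet T x0 k ∧ (pp T x0 k).2 ∈ T k \ accSet T x0 k ∧
      (pp T x0 k).1 ≠ (pp T x0 k).2 :=
  pickPair_spec x0 (hk.diff (accSet_finite T x0 k))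

end WeakLambdaAux

open WeakLambdaAux

theorem stmt5 {α : Type*} [TopologicalSpace α] [PolishSpace α] (Z : Set α)
    (h : IsWeakLambda Z) (P : Set α) (hP : Perfect P) (hne : P.Nonempty) :
    IsMeagre (Subtype.val ⁻¹' Z : Set P) := by
  letI := TopologicalSpace.upgradeIsCompletelyMetrizable α
  obtain ⟨x0, hx0⟩ := hne
  -- enumerate a countable basis
  have hBne : (TopologicalSpace.countableBasis α).Nonempty := by
    obtain ⟨v, hv, -, -⟩ :=
      (TopologicalSpace.isBasis_countableBasis α).exists_subset_of_mem_open (Set.mem_univ x0)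
        isOpen_univ
    exact ⟨v, hv⟩
  obtain ⟨B, hB⟩ := (TopologicalSpace.countable_countableBasis α).exists_eq_range hBne
  have hBopen : ∀ k, IsOpen (B k) := fun k =>
    TopologicalSpace.isOpen_of_mem_countableBasis (hB ▸ Set.mem_range_self k)
  have hBbasis : ∀ {x : α} {V : Set α}, IsOpen V → x ∈ V → ∃ k, x ∈ B k ∧ B k ⊆ V := by
    intro x V hV hxV
    obtain ⟨v, hv, hxv, hvV⟩ :=
      (TopologicalSpace.isBasis_countableBasis α).exists_subset_of_mem_open hxV hV
    rw [hB] at hv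
    obtain ⟨k, rfl⟩ := hv
    exact ⟨k, hxv, hvV⟩
  set T : ℕ → Set α := fun k => B k ∩ (Z ∩ P) with hT
  set S : Set ℕ := {k | (T k).Infinite} with hS
  set D0 : Set α := (fun k => (pp T x0 k).1) '' S with hD0
  set D1 : Set α := (fun k => (pp T x0 k).2) '' S with hD1
  have hD0sub : D0 ⊆ Z ∩ P := by
    rintro x ⟨k, hk, rfl⟩
    exact ((pp_spec T x0 hk).1.1).2
  have hD1sub : D1 ⊆ Z ∩ P := by
    rintro x ⟨k, hk, rfl⟩
    exact ((pp_spec T x0 hk).2.1.1).2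
  have hdisj : Disjoint D0 D1 := by
    rw [Set.disjoint_left]
    rintro x ⟨k, hk, rfl⟩ ⟨j, hj, hx⟩
    change (pp T x0 j).2 = (pp T x0 k).1 at hx
    rcases lt_trichotomy k j with hkj | rfl | hjk
    · have := (mem_accSet_of_lt T x0 hkj).1
      rw [← hx] at this
      exact (pp_spec T x0 hj).2.1.2 this
    · exact (pp_spec T x0 hk).2.2 hx.symm
    · have := (mem_accSet_of_lt T x0 hjk).2
      rw [hx] at this
      exact (pp_spec T x0 hk).1.2 this
  -- apply the weak λ property
  obtain ⟨H, hHZ, ⟨U, hUopen, hHU⟩, ⟨C, hCclosed, hHC⟩, hD0H, hD1H⟩ :=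
    h D0 D1 (hD0sub.trans inter_subset_left) (hD1sub.trans inter_subset_left)
      ((Set.to_countable S).image _) ((Set.to_countable S).image _) hdisj
  -- points all of whose neighborhoods meet Z ∩ P in an infinite set
  set L : Set α := {x | x ∈ Z ∩ P ∧ ∀ V : Set α, IsOpen V → x ∈ V → (V ∩ (Z ∩ P)).Infinite}
    with hL
  have hA : ((Z ∩ P) \ L).Countable := by
    have hsub : (Z ∩ P) \ L ⊆ ⋃ k ∈ Sᶜ, T k := by
      rintro x ⟨hx, hxL⟩
      simp only [hL, Set.mem_setOf_eq, not_and, not_forall] at hxL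
      obtain ⟨V, hV, hxV, hfin⟩ := hxL hx
      obtain ⟨k, hxk, hkV⟩ := hBbasis hV hxV
      refine Set.mem_biUnion (show k ∈ Sᶜ from ?_) (⟨hxk, hx⟩ : x ∈ T k)
      simp only [hS, Set.mem_compl_iff, Set.mem_setOf_eq, Set.not_infinite]
      exact (Set.not_infinite.mp hfin).subset fun y hy => ⟨hkV hy.1, hy.2⟩
    exact Set.Countable.mono hsub <| Set.Countable.biUnion (Set.to_countable _)
      fun k hk => (Set.not_infinite.mp hk).countable
  have hLD0 : L ⊆ closure D0 := by
    rintro x ⟨hx, hxL⟩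
    rw [mem_closure_iff]
    intro V hV hxV
    obtain ⟨k, hxk, hkV⟩ := hBbasis hV hxV
    have hkS : k ∈ S := (hxL (B k) (hBopen k) hxk).mono fun y hy => ⟨hy.1, hy.2⟩
    exact ⟨(pp T x0 k).1, hkV (pp_spec T x0 hkS).1.1.1, ⟨k, hkS, rfl⟩⟩
  have hLD1 : L ⊆ closure D1 := by
    rintro x ⟨hx, hxL⟩
    rw [mem_closure_iff]
    intro V hV hxV
    obtain ⟨k, hxk, hkV⟩ := hBbasis hV hxV
    have hkS : k ∈ S := (hxL (B k) (hBopen k) hxk).mono fun y hy => ⟨hy.1, hy.2⟩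
    exact ⟨(pp T x0 k).2, hkV (pp_spec T x0 hkS).2.1.1.1, ⟨k, hkS, rfl⟩⟩
  -- the three meagre pieces in the subspace P
  set N1 : ℕ → Set P := fun n => Subtype.val ⁻¹' (C n ∩ closure D1) with hN1
  set N2 : ℕ → Set P := fun n => Subtype.val ⁻¹' ((U n)ᶜ ∩ closure D0) with hN2
  set A : Set P := Subtype.val ⁻¹' ((Z ∩ P) \ L) with hA'
  have hN1m : ∀ n, IsMeagre (N1 n) := by
    intro n
    have hcl : IsClosed (N1 n) :=
      ((hCclosed n).inter isClosed_closure).preimage continuous_subtype_val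
    have hint : interior (N1 n) = ∅ := by
      rw [← Set.subset_empty_iff]
      intro x hxint
      obtain ⟨V, hVopen, hVeq⟩ := isOpen_induced_iff.mp (isOpen_interior (s := N1 n))
      have hxV : (x : α) ∈ V := by rw [← hVeq] at hxint; exact hxint
      have hxN : (x : α) ∈ C n ∩ closure D1 := (interior_subset hxint : x ∈ N1 n)
      obtain ⟨d, hdV, hdD1⟩ := mem_closure_iff.mp hxN.2 V hVopen hxV
      have hdZP : d ∈ Z ∩ P := hD1sub hdD1
      have : (⟨d, hdZP.2⟩ : P) ∈ interior (N1 n) := by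
        rw [← hVeq]; exact hdV
      have hdC : d ∈ C n := (interior_subset this).1
      have hdH : d ∈ H := by rw [hHC]; exact ⟨hdZP.1, Set.mem_iUnion.mpr ⟨n, hdC⟩⟩
      exact (hD1H hdD1).2 hdH
    have : IsNowhereDense (N1 n) := by rw [IsNowhereDense, hcl.closure_eq, hint]
    -- nowhere dense implies meagre
    rw [isMeagre_iff_countable_union_isNowhereDense]
    exact ⟨{N1 n}, by simpa using this, Set.countable_singleton _, by simp⟩
  have hN2m : ∀ n, IsMeagre (N2 n) := by
    intro n
    have hcl : IsClosed (N2 n) :=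
      ((isClosed_compl_iff.mpr (hUopen n)).inter isClosed_closure).preimage
        continuous_subtype_val
    have hint : interior (N2 n) = ∅ := by
      rw [← Set.subset_empty_iff]
      intro x hxint
      obtain ⟨V, hVopen, hVeq⟩ := isOpen_induced_iff.mp (isOpen_interior (s := N2 n))
      have hxV : (x : α) ∈ V := by rw [← hVeq] at hxint; exact hxint
      have hxN : (x : α) ∈ (U n)ᶜ ∩ closure D0 := (interior_subset hxint : x ∈ N2 n)
      obtain ⟨d, hdV, hdD0⟩ := mem_closure_iff.mp hxN.2 V hVopen hxV
      have hdZP : d ∈ Z ∩ P := hD0sub hdD0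
      have : (⟨d, hdZP.2⟩ : P) ∈ interior (N2 n) := by
        rw [← hVeq]; exact hdV
      have hdU : d ∉ U n := (interior_subset this).1
      have : d ∈ H := hD0H hdD0
      rw [hHU] at this
      exact hdU (Set.mem_iInter.mp this.2 n)
    have hnd : IsNowhereDense (N2 n) := by rw [IsNowhereDense, hcl.closure_eq, hint]
    rw [isMeagre_iff_countable_union_isNowhereDense]
    exact ⟨{N2 n}, by simpa using hnd, Set.countable_singleton _, by simp⟩
  have hAm : IsMeagre A := by
    have hAc : A.Countable := hA.preimage Subtype.coe_injective
    -- countable sets are meagre in a perfect set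
    rw [isMeagre_iff_countable_union_isNowhereDense]
    refine ⟨(fun x => ({x} : Set P)) '' A, ?_, hAc.image _, ?_⟩
    · rintro t ⟨x, -, rfl⟩
      have hclx : closure ({x} : Set P) = {x} := isClosed_singleton.closure_eq
      rw [IsNowhereDense, hclx, ← Set.subset_empty_iff]
      intro y hy
      obtain ⟨V, hVopen, hVeq⟩ := isOpen_induced_iff.mp (isOpen_interior (s := ({x} : Set P)))
      have hyx : y = x := (interior_subset hy : y ∈ ({x} : Set P))
      subst hyx
      have hyV : (y : α) ∈ V := by rw [← hVeq] at hy; exact hy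
      obtain ⟨z, hzVP, hzy⟩ := accPt_iff_nhds.mp (hP.acc (y : α) y.2) V
        ((hVopen).mem_nhds hyV)
      have : (⟨z, hzVP.2⟩ : P) ∈ interior ({y} : Set P) := by
        rw [← hVeq]; exact hzVP.1
      have : (⟨z, hzVP.2⟩ : P) = y := (interior_subset this : _ ∈ ({y} : Set P))
      exact hzy (congrArg Subtype.val this)
    · intro x hx
      exact ⟨{x}, ⟨x, hx, rfl⟩, rfl⟩
  -- assemble
  have hunion : ∀ {s t : Set P}, IsMeagre s → IsMeagre t → IsMeagre (s ∪ t) := by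
    intro s t hs ht
    rw [IsMeagre, Set.compl_union]
    exact Filter.inter_mem hs ht
  have hcover : (Subtype.val ⁻¹' Z : Set P) ⊆ A ∪ ((⋃ n, N1 n) ∪ ⋃ n, N2 n) := by
    intro x hx
    have hxZP : (x : α) ∈ Z ∩ P := ⟨hx, x.2⟩
    by_cases hxL : (x : α) ∈ L
    · by_cases hxH : (x : α) ∈ H
      · have hxC : (x : α) ∈ ⋃ n, C n := by rw [hHC] at hxH; exact hxH.2
        obtain ⟨n, hn⟩ := Set.mem_iUnion.mp hxC
        exact Or.inr (Or.inl (Set.mem_iUnion.mpr ⟨n, ⟨hn, hLD1 hxL⟩⟩))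
      · have hxU : (x : α) ∉ ⋂ n, U n := fun hc => hxH (by rw [hHU]; exact ⟨hxZP.1, hc⟩)
        obtain ⟨n, hn⟩ := by
          simpa only [Set.mem_iInter, not_forall] using hxU
        exact Or.inr (Or.inr (Set.mem_iUnion.mpr ⟨n, ⟨hn, hLD0 hxL⟩⟩))
    · exact Or.inl ⟨hxZP, hxL⟩
  exact ((hunion hAm (hunion (isMeagre_iUnion hN1m) (isMeagre_iUnion hN2m)))).mono hcover
end

section
/- If X ⊆ 2^ω is concentrated on each of two disjoint countable sets F₀, F₁ ⊆ 2^ω (meaning: for every open U ⊇ F_i, X∖U is countable, for i = 0,1) and F₀, F₁ ⊆ X with F₀, F₁ infinite, then X is not a weak λ-set. -/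
open Set Topology

theorem stmt7 (X F₀ F₁ : Set (ℕ → Bool)) (hX : ¬ X.Countable)
    (h0 : F₀ ⊆ X) (h1 : F₁ ⊆ X) (hc0 : F₀.Countable) (hc1 : F₁.Countable)
    (hi0 : F₀.Infinite) (hi1 : F₁.Infinite) (hd : Disjoint F₀ F₁)
    (hcon0 : ∀ U : Set (ℕ → Bool), IsOpen U → F₀ ⊆ U → (X \ U).Countable)
    (hcon1 : ∀ U : Set (ℕ → Bool), IsOpen U → F₁ ⊆ U → (X \ U).Countable) :
    ¬ IsWeakLambda X := by
  intro hw
  obtain ⟨H, hHX, ⟨U, hUo, hHU⟩, ⟨C, hCc, hHC⟩, hF0H, hF1H⟩ :=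
    hw F₀ F₁ h0 h1 hc0 hc1 hd
  -- X \ H is countable, using concentration on F₀
  have hXH : (X \ H).Countable := by
    have hsub : X \ H ⊆ ⋃ n, X \ U n := by
      rintro x ⟨hx, hxH⟩
      by_contra hnot
      simp only [mem_iUnion, mem_diff, not_exists, not_and, not_not] at hnot
      exact hxH (hHU ▸ ⟨hx, mem_iInter.2 fun n => hnot n hx⟩)
    refine (Set.countable_iUnion fun n => ?_).mono hsub
    refine hcon0 (U n) (hUo n) fun y hy => ?_
    have : y ∈ X ∩ ⋂ n, U n := hHU ▸ hF0H hy
    exact mem_iInter.1 this.2 n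
  -- H is countable, using concentration on F₁
  have hH : H.Countable := by
    have : H ⊆ ⋃ n, X ∩ C n := by
      rintro x hx
      have hx' : x ∈ X ∩ ⋃ n, C n := hHC ▸ hx
      obtain ⟨n, hn⟩ := mem_iUnion.1 hx'.2
      exact mem_iUnion.2 ⟨n, hx'.1, hn⟩
    refine (Set.countable_iUnion fun n => ?_).mono this
    have h1n : F₁ ⊆ (C n)ᶜ := by
      intro y hy hyC
      have hyH : y ∈ H := hHC ▸ ⟨h1 hy, mem_iUnion.2 ⟨n, hyC⟩⟩
      exact (hF1H hy).2 hyH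
    have := hcon1 (C n)ᶜ (hCc n).isOpen_compl h1n
    refine this.mono fun y hy => ?_
    exact ⟨hy.1, by simpa using hy.2⟩
  exact hX ((hH.union hXH).mono fun x hx => by
    by_cases h : x ∈ H
    · exact Or.inl h
    · exact Or.inr ⟨hx, h⟩)
end

section
/- Let X ⊆ 2^ω and Y, Z ⊆ X be disjoint subsets such that there exists an F ⊆ 2^ω that is simultaneously F_σ and G_δ in 2^ω with Y ⊆ F∩X and Z ⊆ X∖F. Then there exists W ⊆ 2^{<ω} with {y↾n : n∈ω} ⊆* W for all y ∈ Y and {z↾n : n∈ω} ∩ W finite for all z ∈ Z. -/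
open Set Topology

lemma res_eq_forward {x y : ℕ → Bool} {k : ℕ} (h : res x k = res y k) :
    ∀ i < k, x i = y i := by
  intro i hi
  have := congrArg (fun l => l.getD i true) h
  simpa [res, List.getD_eq_getElem?_getD, List.getElem?_map, List.getElem?_range, hi] using this


-- separation lemma
lemma sep (C D : Set (ℕ → Bool)) (hC : IsClosed C) (hD : IsClosed D) (h : Disjoint C D) :
    ∃ m : ℕ, ∀ x ∈ C, ∀ y ∈ D, ∃ i < m, x i ≠ y i := by
  have key : ∀ x ∈ C, ∃ m : ℕ, PiNat.cylinder x m ⊆ Dᶜ := by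
    intro x hx
    have hxD : x ∈ Dᶜ := fun hxD => (h.le_bot ⟨hx, hxD⟩)
    obtain ⟨v, ⟨y, n, rfl⟩, hxv, hvs⟩ :=
      (PiNat.isTopologicalBasis_cylinders (fun _ : ℕ => Bool)).exists_subset_of_mem_open hxD
        hD.isOpen_compl
    exact ⟨n, by rwa [PiNat.mem_cylinder_iff_eq.1 hxv]⟩
  choose! m hm using key
  obtain ⟨t, htC, hcov⟩ := hC.isCompact.elim_nhds_subcover (fun x => PiNat.cylinder x (m x))
    (fun x hx => (PiNat.isOpen_cylinder _ _ _).mem_nhds (PiNat.self_mem_cylinder _ _))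
  refine ⟨t.sup m, fun x hx y hy => ?_⟩
  by_contra hcon
  push_neg at hcon
  obtain ⟨x₀, hx₀t, hx₀⟩ := Set.mem_iUnion₂.1 (hcov hx)
  have : y ∈ PiNat.cylinder x₀ (m x₀) := by
    intro i hi
    have h1 : i < t.sup m := lt_of_lt_of_le hi (Finset.le_sup hx₀t)
    rw [← hcon i h1]
    exact hx₀ i hi
  exact hm x₀ (htC x₀ hx₀t) this hy



theorem stmt19 (X Y Z : Set (ℕ → Bool)) (hY : Y ⊆ X) (hZ : Z ⊆ X) (hd : Disjoint Y Z)
    (F : Set (ℕ → Bool)) (hFs : IsFsigma F) (hGd : IsGδ F)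
    (hYF : Y ⊆ F ∩ X) (hZF : Z ⊆ X \ F) :
    ∃ W : Set (List Bool),
      (∀ y ∈ Y, (branch y \ W).Finite) ∧ (∀ z ∈ Z, (branch z ∩ W).Finite) := by
  unfold IsFsigma at hFs
  unfold branch
  obtain ⟨C, hCcl, hFC⟩ := hFs
  obtain ⟨U, hUo, hFU⟩ := isGδ_iff_eq_iInter_nat.1 hGd
  set D : ℕ → Set (ℕ → Bool) := fun n => (U n)ᶜ with hD
  have hDcl : ∀ n, IsClosed (D n) := fun n => (hUo n).isClosed_compl
  have hFcU : Fᶜ = ⋃ n, D n := by rw [hFU, Set.compl_iInter]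
  set Cc : ℕ → Set (ℕ → Bool) := fun n => ⋃ i ∈ Set.Iic n, C i with hCc
  set Dc : ℕ → Set (ℕ → Bool) := fun n => ⋃ i ∈ Set.Iic n, D i with hDc
  have hCccl : ∀ n, IsClosed (Cc n) :=
    fun n => (Set.finite_Iic n).isClosed_biUnion (fun i _ => hCcl i)
  have hDccl : ∀ n, IsClosed (Dc n) :=
    fun n => (Set.finite_Iic n).isClosed_biUnion (fun i _ => hDcl i)
  have hCcF : ∀ n, Cc n ⊆ F := fun n => Set.iUnion₂_subset fun i _ => hFC ▸ Set.subset_iUnion C i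
  have hDcF : ∀ n, Dc n ⊆ Fᶜ := fun n => Set.iUnion₂_subset fun i _ =>
    hFcU ▸ Set.subset_iUnion D i
  have hdisj : ∀ n, Disjoint (Cc n) (Dc n) := fun n =>
    Set.disjoint_left.2 fun a ha hb => (hDcF n hb) (hCcF n ha)
  choose m hm using fun n => sep (Cc n) (Dc n) (hCccl n) (hDccl n) (hdisj n)
  set M : ℕ → ℕ := fun n => (∑ i ∈ Finset.range (n + 1), m i) + n with hM
  have hMself : ∀ n, n ≤ M n := fun n => Nat.le_add_left n _
  have hmM : ∀ n, m n ≤ M n := fun n =>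
    le_trans (Finset.single_le_sum (fun i _ => Nat.zero_le (m i))
      (Finset.self_mem_range_succ n)) (Nat.le_add_right _ _)
  have hMmono : Monotone M := by
    intro a b hab
    exact Nat.add_le_add (Finset.sum_le_sum_of_subset
      (Finset.range_subset_range.2 (Nat.succ_le_succ hab))) hab
  set φ : ℕ → ℕ := fun k => Nat.findGreatest (fun n => M n ≤ k) k with hφ
  set W : Set (List Bool) :=
    { s | ∃ x : ℕ → Bool, res x s.length = s ∧ x ∈ Cc (φ s.length) } with hW
  refine ⟨W, ?_, ?_⟩
  · intro y hy
    obtain ⟨hyF, -⟩ := hYF hy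
    rw [hFC] at hyF
    obtain ⟨n₀, hn₀⟩ := Set.mem_iUnion.1 hyF
    have key : ∀ k, M n₀ ≤ k → res y k ∈ W := by
      intro k hk
      have hφk : n₀ ≤ φ k := Nat.le_findGreatest (le_trans (hMself n₀) hk) hk
      refine ⟨y, by rw [res_length], ?_⟩
      rw [res_length]
      exact Set.mem_biUnion hφk hn₀
    have : (Set.range (res y)) \ W ⊆ res y '' (Set.Iio (M n₀)) := by
      rintro s ⟨⟨k, rfl⟩, hsW⟩
      exact ⟨k, by by_contra hk; exact hsW (key k (not_lt.1 fun h => hk (Set.mem_Iio.2 h))), rfl⟩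
    exact (Set.Finite.image _ (Set.finite_Iio _)).subset this
  · intro z hz
    obtain ⟨-, hzF⟩ := hZF hz
    have hzF' : z ∈ ⋃ n, D n := hFcU ▸ (Set.mem_compl hzF)
    obtain ⟨n₀, hn₀⟩ := Set.mem_iUnion.1 hzF'
    have key : ∀ k, M n₀ ≤ k → M 0 ≤ k → res z k ∉ W := by
      intro k hk hk0 hmem
      obtain ⟨x, hx1, hx2⟩ := hmem
      rw [res_length] at hx1 hx2
      have hφk : n₀ ≤ φ k := Nat.le_findGreatest (le_trans (hMself n₀) hk) hk
      have hMφk : M (φ k) ≤ k := Nat.findGreatest_spec (P := fun n => M n ≤ k) (Nat.zero_le k) hk0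
      have hzD : z ∈ Dc (φ k) := Set.mem_biUnion hφk hn₀
      obtain ⟨i, hi, hne⟩ := hm (φ k) x hx2 z hzD
      exact hne (res_eq_forward hx1 i (lt_of_lt_of_le hi (le_trans (hmM _) hMφk)))
    have : (Set.range (res z)) ∩ W ⊆ res z '' (Set.Iio (max (M n₀) (M 0))) := by
      rintro s ⟨⟨k, rfl⟩, hsW⟩
      refine ⟨k, ?_, rfl⟩
      by_contra hk
      rw [Set.mem_Iio, not_lt, max_le_iff] at hk
      exact key k hk.1 hk.2 hsW
    exact (Set.Finite.image _ (Set.finite_Iio _)).subset this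
end
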